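/- Let S be a split system on [n] in which every split A|B has both parts contiguous with respect to a fixed circular order c, and let w assign a nonnegative weight to each split. Define d(i,j) = sum of w(A|B) over splits A|B of S separating i from j. Then d is Kalmanson with respect to c: for every quadruple (i,j,k,l) in circular position in c, max{d(i,j)+d(k,l), d(j,k)+d(i,l)} ≤ d(i,k)+d(j,l). -/

import Mathlib

/-- A subset of Fin n is contiguous (an arc) with respect to the circular order
given by a permutation σ, read cyclically. -/
def IsContiguous (n : ℕ) [NeZero n] (σ : Equiv.Perm (Fin n))
    (A : Finset (Fin n)) : Prop :=
  ∃ (a : Fin n) (m : ℕ),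
    A = (Finset.range m).image (fun t : ℕ => σ (a + (Fin.ofNat n t : Fin n)))

lemma mem_arc {n : ℕ} [NeZero n] (σ : Equiv.Perm (Fin n)) (a : Fin n) (m : ℕ) (x : Fin n) :
    σ x ∈ (Finset.range m).image (fun t : ℕ => σ (a + (Fin.ofNat n t : Fin n))) ↔
      ((x - a).val < m ∨ n ≤ m) := by
  simp only [Finset.mem_image, Finset.mem_range]
  constructor
  · rintro ⟨t, ht, hEq⟩
    have hax : a + (Fin.ofNat n t : Fin n) = x := σ.injective hEq
    by_cases hnm : n ≤ m
    · exact Or.inr hnm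
    · left
      have htx : (Fin.ofNat n t : Fin n) = x - a := by
        rw [← hax]; abel
      have htn : t < n := lt_of_lt_of_le ht (le_of_not_ge hnm)
      have : ((Fin.ofNat n t : Fin n)).val = t := by
        simp [Fin.val_ofNat, Nat.mod_eq_of_lt htn]
      rw [← htx, this]
      exact ht
  · intro h
    refine ⟨(x - a).val, ?_, ?_⟩
    · rcases h with h | h
      · exact h
      · exact lt_of_lt_of_le (x - a).isLt h
    · congr 1
      rw [Fin.ofNat_val_eq_self]
      abel

lemma arc_alt {n : ℕ} [NeZero n] (a : Fin n) (m : ℕ) {p q r s : Fin n}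
    (hpq : p < q) (hqr : q < r) (hrs : r < s) :
    ¬(((p - a).val < m ∨ n ≤ m) ∧ ¬((q - a).val < m ∨ n ≤ m) ∧
      ((r - a).val < m ∨ n ≤ m) ∧ ¬((s - a).val < m ∨ n ≤ m)) := by
  have hmod : ∀ x : Fin n, (x - a).val = n - a.val + x.val ∨
      (x - a).val + n = n - a.val + x.val := by
    intro x
    have hx : (x - a).val = (n - a.val + x.val) % n := by rw [Fin.sub_def]
    have hxn := x.isLt
    have han := a.isLt
    rcases Nat.lt_or_ge (n - a.val + x.val) n with h | h
    · left; rw [hx, Nat.mod_eq_of_lt h]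
    · right; rw [hx, Nat.mod_eq_sub_mod h, Nat.mod_eq_of_lt (by omega)]; omega
  have hp := hmod p
  have hq := hmod q
  have hr := hmod r
  have hs := hmod s
  have hp' := (p - a).isLt
  have hq' := (q - a).isLt
  have hr' := (r - a).isLt
  have hs' := (s - a).isLt
  have h1 : p.val < q.val := hpq
  have h2 : q.val < r.val := hqr
  have h3 : r.val < s.val := hrs
  have h4 : s.val < n := s.isLt
  have h5 : a.val < n := a.isLt
  omega

lemma pointwise (w : ℝ) (hw : 0 ≤ w) (bp bq br bs : Prop)
    [Decidable bp] [Decidable bq] [Decidable br] [Decidable bs]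
    (h1 : ¬(bp ∧ ¬bq ∧ br ∧ ¬bs)) (h2 : ¬(¬bp ∧ bq ∧ ¬br ∧ bs)) :
    ((if bp ↔ bq then (0:ℝ) else w) + (if br ↔ bs then 0 else w) ≤
      (if bp ↔ br then 0 else w) + (if bq ↔ bs then 0 else w)) ∧
    ((if bq ↔ br then (0:ℝ) else w) + (if bp ↔ bs then 0 else w) ≤
      (if bp ↔ br then 0 else w) + (if bq ↔ bs then 0 else w)) := by
  by_cases hp : bp <;> by_cases hq : bq <;> by_cases hr : br <;> by_cases hs : bs <;>
    simp_all <;> linarith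

/-- If every split of a weighted split system S (each split encoded by one of its
parts A, with both A and its complement nonempty and contiguous in the circular
order σ) has nonnegative weight, then the induced split metric
d(i,j) = Σ_{A separates i,j} w(A) is Kalmanson with respect to σ. -/
theorem stmt_11 (n : ℕ) [NeZero n] (σ : Equiv.Perm (Fin n))
    (S : Finset (Finset (Fin n))) (w : Finset (Fin n) → ℝ)
    (hw : ∀ A ∈ S, 0 ≤ w A)
    (hparts : ∀ A ∈ S, A.Nonempty ∧ Aᶜ.Nonempty)
    (hcontig : ∀ A ∈ S, IsContiguous n σ A ∧ IsContiguous n σ Aᶜ)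
    (d : Fin n → Fin n → ℝ)
    (hd : ∀ i j, d i j = ∑ A ∈ S, if ((i ∈ A) ↔ (j ∈ A)) then 0 else w A) :
    ∀ p q r s : Fin n, p < q → q < r → r < s →
      max (d (σ p) (σ q) + d (σ r) (σ s)) (d (σ q) (σ r) + d (σ p) (σ s)) ≤
        d (σ p) (σ r) + d (σ q) (σ s) := by
  intro p q r s hpq hqr hrs
  have key : ∀ A ∈ S,
      ((if (σ p ∈ A ↔ σ q ∈ A) then (0:ℝ) else w A) +
        (if (σ r ∈ A ↔ σ s ∈ A) then 0 else w A) ≤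
        (if (σ p ∈ A ↔ σ r ∈ A) then 0 else w A) +
        (if (σ q ∈ A ↔ σ s ∈ A) then 0 else w A)) ∧
      ((if (σ q ∈ A ↔ σ r ∈ A) then (0:ℝ) else w A) +
        (if (σ p ∈ A ↔ σ s ∈ A) then 0 else w A) ≤
        (if (σ p ∈ A ↔ σ r ∈ A) then 0 else w A) +
        (if (σ q ∈ A ↔ σ s ∈ A) then 0 else w A)) := by
    intro A hA
    obtain ⟨⟨a, m, hAeq⟩, ⟨a', m', hAceq⟩⟩ := hcontig A hA
    have memA : ∀ x : Fin n, σ x ∈ A ↔ ((x - a).val < m ∨ n ≤ m) := by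
      intro x; rw [hAeq]; exact mem_arc σ a m x
    have memAc : ∀ x : Fin n, σ x ∉ A ↔ ((x - a').val < m' ∨ n ≤ m') := by
      intro x
      rw [← Finset.mem_compl, hAceq]
      exact mem_arc σ a' m' x
    have h1 : ¬(σ p ∈ A ∧ ¬(σ q ∈ A) ∧ σ r ∈ A ∧ ¬(σ s ∈ A)) := by
      rw [memA p, memA q, memA r, memA s]
      exact arc_alt a m hpq hqr hrs
    have h2 : ¬(¬(σ p ∈ A) ∧ σ q ∈ A ∧ ¬(σ r ∈ A) ∧ σ s ∈ A) := by
      have := arc_alt a' m' hpq hqr hrs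
      rw [← memAc p, ← memAc q, ← memAc r, ← memAc s] at this
      tauto
    exact pointwise (w A) (hw A hA) _ _ _ _ h1 h2
  rw [hd, hd, hd, hd, hd, hd]
  apply max_le
  · rw [← Finset.sum_add_distrib, ← Finset.sum_add_distrib]
    exact Finset.sum_le_sum fun A hA => (key A hA).1
  · rw [← Finset.sum_add_distrib, ← Finset.sum_add_distrib]
    exact Finset.sum_le_sum fun A hA => (key A hA).2
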